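/- arXiv:1012.3892 — 7 statements merged into one kernel-verified Lean document; each statement's English description precedes it below -/
import Mathlib

section
/- Fix a positive integer r and let b_i = binom(i+r-1, i) for all positive integers i. Then for every positive integer n, the number of r-matrix compositions of n equals C^b(n). -/
open Finset

/-- The number of generalized compositions of `n` with `k` parts, where the part `i`
comes in `b i` types: the sum over all `k`-tuples of positive integers summing to `n`
of the product of the `b`-values of the parts. -/
def genComp (b : ℕ → ℕ) (n k : ℕ) : ℕ :=
  ∑ f ∈ (Finset.Nat.antidiagonalTuple k n).filter (fun f => ∀ j, 0 < f j),
    ∏ j, b (f j)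

/-- The total number of generalized compositions of `n` (with any number of parts). -/
def genCompAll (b : ℕ → ℕ) (n : ℕ) : ℕ :=
  ∑ k ∈ Finset.range (n + 1), genComp b n k

lemma adt_decomp (k n : ℕ) :
    Finset.Nat.antidiagonalTuple (k + 1) n =
      (Finset.HasAntidiagonal.antidiagonal n).biUnion
        (fun p => (Finset.Nat.antidiagonalTuple k p.2).image (Fin.cons (α := fun _ : Fin (k+1) => ℕ) p.1)) := by
  ext f
  simp only [Finset.Nat.mem_antidiagonalTuple, Finset.mem_biUnion, Finset.mem_image,
    Finset.HasAntidiagonal.mem_antidiagonal, Prod.exists]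
  constructor
  · intro h
    refine ⟨f 0, ∑ i : Fin k, f i.succ, ?_, Fin.tail f, ?_, ?_⟩
    · rw [← h, Fin.sum_univ_succ]
    · rfl
    · exact Fin.cons_self_tail f
  · rintro ⟨a, c, hac, g, hg, rfl⟩
    rw [Fin.sum_cons, hg, hac]

lemma adt_card (k n : ℕ) :
    (Finset.Nat.antidiagonalTuple k n).card = (n + k - 1).choose n := by
  induction k generalizing n with
  | zero =>
    cases n with
    | zero => simp
    | succ m =>
      rw [Finset.Nat.antidiagonalTuple_zero_succ, Finset.card_empty]
      rw [Nat.choose_eq_zero_of_lt (by omega)]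
  | succ k ih =>
    rw [adt_decomp, Finset.card_biUnion]
    · have : ∀ p ∈ Finset.HasAntidiagonal.antidiagonal n,
          ((Finset.Nat.antidiagonalTuple k p.2).image (Fin.cons (α := fun _ : Fin (k+1) => ℕ) p.1)).card
            = (p.2 + k - 1).choose p.2 := by
        intro p _
        rw [Finset.card_image_of_injective _ (Fin.cons_right_injective (α := fun _ => ℕ) p.1), ih]
      rw [Finset.sum_congr rfl this,
        Finset.Nat.sum_antidiagonal_eq_sum_range_succ (fun i j => (j + k - 1).choose j)]
      rw [← Finset.sum_range_reflect]
      have hre : ∀ j ∈ Finset.range (n + 1),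
          ((n - (n + 1 - 1 - j)) + k - 1).choose (n - (n + 1 - 1 - j))
            = (j + k - 1).choose j := by
        intro j hj
        rw [Finset.mem_range] at hj
        congr 1 <;> omega
      rw [Finset.sum_congr rfl hre]
      cases k with
      | zero =>
        rw [Finset.sum_eq_single_of_mem 0 (by simp)]
        · simp
        · intro j _ hj
          exact Nat.choose_eq_zero_of_lt (by omega)
      | succ m =>
        have : ∀ j ∈ Finset.range (n + 1), (j + (m + 1) - 1).choose j = (j + m).choose m := by
          intro j _
          have h1 : j + (m + 1) - 1 = j + m := by omega
          rw [h1, show (j + m).choose j = (j + m).choose ((j + m) - m) by congr 1; omega,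
            Nat.choose_symm (by omega)]
        rw [Finset.sum_congr rfl this, Nat.sum_range_add_choose]
        rw [← Nat.choose_symm (show m + 1 ≤ n + m + 1 by omega)]
        congr 1 <;> omega
    · intro p hp q hq hpq
      rw [Function.onFun, Finset.disjoint_left]
      rintro f hf hf'
      rw [Finset.mem_image] at hf hf'
      obtain ⟨g, hg, rfl⟩ := hf
      obtain ⟨g', hg', he⟩ := hf'
      rw [Fin.cons_inj] at he
      obtain ⟨h1, rfl⟩ := he
      rw [Finset.Nat.mem_antidiagonalTuple] at hg hg'
      rw [Finset.mem_coe, Finset.HasAntidiagonal.mem_antidiagonal] at hp hq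
      exact hpq (Prod.ext h1.symm (by omega))

theorem matrixComposition_count (r : ℕ) (hr : 1 ≤ r) (b : ℕ → ℕ)
    (hb : ∀ i, 1 ≤ i → b i = Nat.choose (i + r - 1) i) (n : ℕ) (hn : 1 ≤ n) :
    {l : List (Fin r → ℕ) | (∀ v ∈ l, v ≠ 0) ∧
      (l.map (fun v => ∑ j, v j)).sum = n}.ncard = genCompAll b n := by
  classical
  set T : Finset (List (Fin r → ℕ)) :=
    (Finset.range (n + 1)).biUnion fun k =>
      ((Finset.Nat.antidiagonalTuple k n).filter (fun f => ∀ j, 0 < f j)).biUnion fun f =>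
        (Fintype.piFinset fun j : Fin k => Finset.Nat.antidiagonalTuple r (f j)).image
          List.ofFn with hT
  have hlen : ∀ k, ∀ f ∈ (Finset.Nat.antidiagonalTuple k n).filter (fun f => ∀ j, 0 < f j),
      ∀ l ∈ (Fintype.piFinset fun j : Fin k => Finset.Nat.antidiagonalTuple r (f j)).image
        List.ofFn, l.length = k := by
    intro k f _ l hl
    rw [Finset.mem_image] at hl
    obtain ⟨v, _, rfl⟩ := hl
    exact List.length_ofFn
  have hsums : ∀ k, ∀ f ∈ (Finset.Nat.antidiagonalTuple k n).filter (fun f => ∀ j, 0 < f j),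
      ∀ v ∈ (Fintype.piFinset fun j : Fin k => Finset.Nat.antidiagonalTuple r (f j)),
      ∀ j : Fin k, ∑ i, v j i = f j := by
    intro k f _ v hv j
    rw [Fintype.mem_piFinset] at hv
    exact Finset.Nat.mem_antidiagonalTuple.mp (hv j)
  have hset : {l : List (Fin r → ℕ) | (∀ v ∈ l, v ≠ 0) ∧
      (l.map (fun v => ∑ j, v j)).sum = n} = ↑T := by
    ext l
    rw [Set.mem_setOf_eq, Finset.mem_coe, hT, Finset.mem_biUnion]
    constructor
    · rintro ⟨hne, hsum⟩
      have hl : l = List.ofFn l.get := (List.ofFn_get l).symm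
      have hs : ∑ j : Fin l.length, ∑ i, l.get j i = n := by
        rw [hl, List.map_ofFn, List.sum_ofFn] at hsum
        exact hsum
      have hpos : ∀ j : Fin l.length, 0 < ∑ i, l.get j i := by
        intro j
        have h0 : l.get j ≠ 0 := hne _ (l.get_mem _)
        obtain ⟨i, hi⟩ := Function.ne_iff.mp h0
        exact Finset.sum_pos' (fun _ _ => Nat.zero_le _)
          ⟨i, Finset.mem_univ i, Nat.pos_of_ne_zero hi⟩
      have hle : l.length ≤ n := by
        calc l.length = ∑ _j : Fin l.length, 1 := by simp
          _ ≤ ∑ j : Fin l.length, ∑ i, l.get j i := Finset.sum_le_sum fun j _ => hpos j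
          _ = n := hs
      refine ⟨l.length, Finset.mem_range.mpr (Nat.lt_succ_of_le hle), Finset.mem_biUnion.mpr
        ⟨fun j => ∑ i, l.get j i,
          Finset.mem_filter.mpr ⟨Finset.Nat.mem_antidiagonalTuple.mpr hs, hpos⟩,
          Finset.mem_image.mpr ⟨l.get,
            Fintype.mem_piFinset.mpr fun j => Finset.Nat.mem_antidiagonalTuple.mpr rfl,
            hl.symm⟩⟩⟩
    · rintro ⟨k, -, hk⟩
      rw [Finset.mem_biUnion] at hk
      obtain ⟨f, hf, hlf⟩ := hk
      rw [Finset.mem_image] at hlf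
      obtain ⟨v, hv, rfl⟩ := hlf
      rw [Finset.mem_filter] at hf
      obtain ⟨hfs, hfpos⟩ := hf
      rw [Fintype.mem_piFinset] at hv
      constructor
      · intro w hw
        rw [List.mem_ofFn] at hw
        obtain ⟨j, rfl⟩ := hw
        intro h0
        have h1 := Finset.Nat.mem_antidiagonalTuple.mp (hv j)
        rw [h0] at h1
        simp only [Pi.zero_apply, Finset.sum_const_zero] at h1
        have := hfpos j
        omega
      · rw [List.map_ofFn, List.sum_ofFn]
        calc ∑ j : Fin k, ∑ i, v j i = ∑ j : Fin k, f j :=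
              Finset.sum_congr rfl fun j _ => Finset.Nat.mem_antidiagonalTuple.mp (hv j)
          _ = n := Finset.Nat.mem_antidiagonalTuple.mp hfs
  rw [hset, Set.ncard_coe_finset, hT]
  rw [Finset.card_biUnion]
  · unfold genCompAll genComp
    refine Finset.sum_congr rfl fun k _ => ?_
    rw [Finset.card_biUnion]
    · refine Finset.sum_congr rfl fun f hf => ?_
      rw [Finset.card_image_of_injective _ List.ofFn_injective, Fintype.card_piFinset]
      rw [Finset.mem_filter] at hf
      refine Finset.prod_congr rfl fun j _ => ?_
      rw [adt_card, hb (f j) (hf.2 j)]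
    · intro f hf g hg hfg
      rw [Function.onFun, Finset.disjoint_left]
      rintro l hlf hlg
      apply hfg
      rw [Finset.mem_image] at hlf hlg
      obtain ⟨v, hv, rfl⟩ := hlf
      obtain ⟨w, hw, he⟩ := hlg
      funext j
      rw [← hsums k f hf v hv j, ← hsums k g hg w hw j,
        show w = v from List.ofFn_injective he]
  · intro k hk k' hk' hkk
    rw [Function.onFun, Finset.disjoint_left]
    rintro l hlk hlk'
    apply hkk
    rw [Finset.mem_biUnion] at hlk hlk'
    obtain ⟨f, hf, hlf⟩ := hlk
    obtain ⟨f', hf', hlf'⟩ := hlk'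
    rw [← hlen k f hf l hlf, ← hlen k' f' hf' l hlf']
end

section
/- Let p be a positive integer and let b_i = p^{i-1} for all positive integers i. Then for every positive integer n, C^b(n) = (1+p)^{n-1}. -/
open Finset

lemma sum_AT_succ {M : Type*} [AddCommMonoid M] (k n : ℕ) (F : (Fin (k+1) → ℕ) → M) :
    ∑ f ∈ Finset.Nat.antidiagonalTuple (k+1) n, F f
      = ∑ ij ∈ Finset.HasAntidiagonal.antidiagonal n,
          ∑ g ∈ Finset.Nat.antidiagonalTuple k ij.2, F (Fin.cons ij.1 g) := by
  rw [Finset.sum_sigma']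
  refine Finset.sum_nbij' (i := fun f => ⟨(f 0, ∑ j, Fin.tail f j), Fin.tail f⟩)
    (j := fun x => Fin.cons x.1.1 x.2) ?_ ?_ ?_ ?_ ?_
  · intro f hf
    rw [Finset.Nat.mem_antidiagonalTuple] at hf
    simp only [Finset.mem_sigma, Finset.HasAntidiagonal.mem_antidiagonal, Finset.Nat.mem_antidiagonalTuple,
      Fin.tail]
    refine ⟨?_, trivial⟩
    rw [← hf, Fin.sum_univ_succ]
  · intro x hx
    rw [Finset.mem_sigma, Finset.HasAntidiagonal.mem_antidiagonal, Finset.Nat.mem_antidiagonalTuple] at hx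
    rw [Finset.Nat.mem_antidiagonalTuple, Fin.sum_univ_succ]
    simp [Fin.cons_zero, Fin.cons_succ, hx.2, hx.1]
  · intro f _; exact Fin.cons_self_tail f
  · intro x hx
    rw [Finset.mem_sigma, Finset.HasAntidiagonal.mem_antidiagonal, Finset.Nat.mem_antidiagonalTuple] at hx
    obtain ⟨⟨a, c⟩, g⟩ := x
    simp only [Fin.cons_zero, Fin.tail_cons] at *
    have h2 : ∑ j, g j = c := hx.2
    simp [h2]
  · intro f _; rw [Fin.cons_self_tail]

lemma genComp_eq_zero (b : ℕ → ℕ) {n k : ℕ} (h : n < k) : genComp b n k = 0 := by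
  rw [genComp]
  have : (Finset.Nat.antidiagonalTuple k n).filter (fun f => ∀ j, 0 < f j) = ∅ := by
    refine Finset.eq_empty_of_forall_notMem fun f hf => ?_
    rw [Finset.mem_filter, Finset.Nat.mem_antidiagonalTuple] at hf
    have : k ≤ n := by
      calc k = ∑ _j : Fin k, 1 := by simp
      _ ≤ ∑ j, f j := Finset.sum_le_sum fun j _ => hf.2 j
      _ = n := hf.1
    omega
  rw [this, Finset.sum_empty]

lemma genComp_zero_left (b : ℕ → ℕ) (n : ℕ) (hn : 1 ≤ n) : genComp b n 0 = 0 := by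
  obtain ⟨m, rfl⟩ : ∃ m, n = m + 1 := ⟨n - 1, by omega⟩
  simp [genComp, Finset.Nat.antidiagonalTuple_zero_succ]

lemma genCompAll_zero (b : ℕ → ℕ) : genCompAll b 0 = 1 := by
  simp [genCompAll, genComp, Finset.Nat.antidiagonalTuple_zero_zero]

lemma genComp_succ (b : ℕ → ℕ) (n k : ℕ) :
    genComp b n (k+1)
      = ∑ ij ∈ Finset.HasAntidiagonal.antidiagonal n,
          (if 0 < ij.1 then b ij.1 * genComp b ij.2 k else 0) := by
  rw [genComp, Finset.sum_filter, sum_AT_succ]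
  refine Finset.sum_congr rfl fun ij _ => ?_
  rw [genComp, Finset.sum_filter]
  by_cases hi : 0 < ij.1
  · rw [if_pos hi, Finset.mul_sum]
    refine Finset.sum_congr rfl fun g _ => ?_
    have hcond : (∀ j : Fin (k+1), 0 < Fin.cons (α := fun _ => ℕ) ij.1 g j) ↔ (∀ j, 0 < g j) := by
      rw [Fin.forall_fin_succ]
      simp [Fin.cons_zero, Fin.cons_succ, hi]
    simp only [hcond]
    by_cases hg : ∀ j, 0 < g j
    · rw [if_pos hg, if_pos hg, Fin.prod_univ_succ]
      simp [Fin.cons_zero, Fin.cons_succ]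
    · rw [if_neg hg, if_neg hg, mul_zero]
  · rw [if_neg hi]
    refine Finset.sum_eq_zero fun g _ => ?_
    rw [if_neg]
    intro hall
    exact hi (by simpa [Fin.cons_zero] using hall 0)

lemma genCompAll_rec (b : ℕ → ℕ) (n : ℕ) (hn : 1 ≤ n) :
    genCompAll b n
      = ∑ ij ∈ Finset.HasAntidiagonal.antidiagonal n,
          (if 0 < ij.1 then b ij.1 * genCompAll b ij.2 else 0) := by
  rw [genCompAll, Finset.sum_range_succ', genComp_zero_left b n hn, add_zero]
  have h1 : ∀ k ∈ Finset.range n, genComp b n (k+1)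
      = ∑ ij ∈ Finset.HasAntidiagonal.antidiagonal n, (if 0 < ij.1 then b ij.1 * genComp b ij.2 k else 0) :=
    fun k _ => genComp_succ b n k
  rw [Finset.sum_congr rfl h1, Finset.sum_comm]
  refine Finset.sum_congr rfl fun ij hij => ?_
  rw [Finset.HasAntidiagonal.mem_antidiagonal] at hij
  by_cases hi : 0 < ij.1
  · simp only [if_pos hi]
    rw [← Finset.mul_sum, genCompAll]
    congr 1
    have hsub : Finset.range (ij.2 + 1) ⊆ Finset.range n := by
      apply Finset.range_subset_range.2; omega
    rw [Finset.sum_subset hsub]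
    intro k hk hk2
    rw [Finset.mem_range] at hk hk2
    exact genComp_eq_zero b (by omega)
  · simp [hi]

lemma geo (p m : ℕ) : ∑ t ∈ Finset.range (m+1), p^t * (1+p)^(m-1-t) = (1+p)^m := by
  induction m with
  | zero => simp
  | succ m ih =>
    have key : ∑ t ∈ Finset.range (m+1), p^t * (1+p)^(m+1-1-t)
        = (1+p) * (∑ t ∈ Finset.range m, p^t * (1+p)^(m-1-t)) + p^m := by
      rw [Finset.sum_range_succ]
      congr 1
      · rw [Finset.mul_sum]
        refine Finset.sum_congr rfl fun t ht => ?_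
        rw [Finset.mem_range] at ht
        have h2 : m + 1 - 1 - t = (m - 1 - t) + 1 := by omega
        rw [h2, pow_succ]; ring
      · simp
    rw [Finset.sum_range_succ] at ih
    have hmm : m - 1 - m = 0 := by omega
    rw [hmm, pow_zero, mul_one] at ih
    rw [Finset.sum_range_succ, key]
    have h3 : m + 1 - 1 - (m+1) = 0 := by omega
    rw [h3, pow_zero, mul_one]
    calc (1+p) * (∑ t ∈ Finset.range m, p^t * (1+p)^(m-1-t)) + p^m + p^(m+1)
        = (1+p) * ((∑ t ∈ Finset.range m, p^t * (1+p)^(m-1-t)) + p^m) := by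
          rw [pow_succ]; ring
      _ = (1+p) * (1+p)^m := by rw [ih]
      _ = (1+p)^(m+1) := by rw [← pow_succ']

theorem genCompAll_pow (p : ℕ) (hp : 1 ≤ p) (b : ℕ → ℕ) (hb : ∀ i, 1 ≤ i → b i = p ^ (i - 1))
    (n : ℕ) (hn : 1 ≤ n) :
    genCompAll b n = (1 + p) ^ (n - 1) := by
  induction n using Nat.strong_induction_on with
  | _ n IH =>
  rw [genCompAll_rec b n hn, Finset.Nat.sum_antidiagonal_eq_sum_range_succ_mk,
    Finset.sum_range_succ']
  simp only [if_neg (Nat.lt_irrefl 0), add_zero]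
  obtain ⟨m, rfl⟩ : ∃ m, n = m + 1 := ⟨n - 1, by omega⟩
  simp only [Nat.add_sub_cancel]
  rw [← geo p m]
  refine Finset.sum_congr rfl fun t ht => ?_
  rw [Finset.mem_range] at ht
  rw [if_pos (Nat.succ_pos t), hb (t+1) (by omega), Nat.add_sub_cancel]
  congr 1
  have hsub : m + 1 - (t + 1) = m - t := by omega
  rw [hsub]
  rcases Nat.eq_or_lt_of_le (Nat.le_of_lt_succ ht) with h | h
  · subst h
    rw [Nat.sub_self, genCompAll_zero]
    have : t - 1 - t = 0 := by omega
    rw [this, pow_zero]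
  · rw [IH (m - t) (by omega) (by omega)]
    congr 1
    omega
end

section
/- Let m be a positive integer and let b_i = m·(i-1) for all positive integers i. Then for all positive integers n and k, C^b(n,k) = m^k · binom(n-1, 2k-1). -/
open Finset

/-- Binomial convolution on the upper index. -/
lemma choose_conv (q : ℕ) : ∀ (N p : ℕ),
    ∑ ij ∈ Finset.HasAntidiagonal.antidiagonal N, ij.1.choose p * ij.2.choose q
      = (N + 1).choose (p + q + 1) := by
  intro N
  induction N with
  | zero =>
    intro p
    cases p with
    | zero =>
      cases q with
      | zero => simp
      | succ q => simp [Nat.choose_eq_zero_of_lt]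
    | succ p =>
      simp [Nat.choose_eq_zero_of_lt, Nat.succ_lt_succ (Nat.lt_of_lt_of_le p.succ_pos
        (Nat.le_add_right _ _))]
  | succ N ih =>
    intro p
    rw [Finset.Nat.sum_antidiagonal_succ]
    cases p with
    | zero =>
      have h1 : ∀ ij ∈ Finset.HasAntidiagonal.antidiagonal N, (ij.1 + 1).choose 0 * ij.2.choose q
          = ij.1.choose 0 * ij.2.choose q := by intro ij _; simp
      rw [Finset.sum_congr rfl h1, ih 0]
      simp only [Nat.choose_zero_right, one_mul, Nat.zero_add]
      have h2 := Nat.choose_succ_succ (N + 1) q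
      simp only [Nat.succ_eq_add_one] at h2
      omega
    | succ p =>
      have h1 : ∀ ij ∈ Finset.HasAntidiagonal.antidiagonal N, (ij.1 + 1).choose (p + 1) * ij.2.choose q
          = ij.1.choose p * ij.2.choose q + ij.1.choose (p + 1) * ij.2.choose q := by
        intro ij _
        rw [Nat.choose_succ_succ, Nat.add_mul]
      rw [Finset.sum_congr rfl h1, Finset.sum_add_distrib, ih p, ih (p + 1)]
      have h2 : ((0 : ℕ), N + 1).1.choose (p + 1) * ((0 : ℕ), N + 1).2.choose q = 0 := by
        simp
      have h3 : (N + 1 + 1).choose (p + 1 + q + 1)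
          = (N + 1).choose (p + q + 1) + (N + 1).choose (p + 1 + q + 1) := by
        have h4 := Nat.choose_succ_succ (N + 1) (p + q + 1)
        simp only [Nat.succ_eq_add_one] at h4
        rw [show p + 1 + q + 1 = p + q + 1 + 1 by ring]
        omega
      omega

/-- Shift lemma: if `f i j = 0` whenever `j < k`, a sum over the antidiagonal of `N + k`
equals a shifted sum over the antidiagonal of `N`. -/
lemma antidiagonal_shift : ∀ (k : ℕ) (f : ℕ → ℕ → ℕ), (∀ i j, j < k → f i j = 0) → ∀ N,
    ∑ ij ∈ Finset.HasAntidiagonal.antidiagonal (N + k), f ij.1 ij.2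
      = ∑ ij ∈ Finset.HasAntidiagonal.antidiagonal N, f ij.1 (ij.2 + k) := by
  intro k
  induction k with
  | zero => intro f _ N; simp
  | succ k ih =>
    intro f hf N
    have hNk : N + (k + 1) = (N + k) + 1 := by ring
    rw [hNk, Finset.Nat.sum_antidiagonal_succ', hf _ 0 k.succ_pos, Nat.zero_add]
    have ih' := ih (fun i j => f i (j + 1)) (fun i j hj => hf i (j + 1) (Nat.succ_lt_succ hj)) N
    rw [show (∑ ij ∈ Finset.HasAntidiagonal.antidiagonal (N + k), f ij.1 (ij.2 + 1))
        = ∑ ij ∈ Finset.HasAntidiagonal.antidiagonal (N + k), (fun i j => f i (j + 1)) ij.1 ij.2 from rfl, ih']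
    apply Finset.sum_congr rfl
    intro ij _
    simp [Nat.add_assoc]

/-- Recursion for sums over `antidiagonalTuple (k+1) n` via `Fin.cons`. -/
lemma sum_antidiagonalTuple_succ (k n : ℕ) (F : (Fin (k + 1) → ℕ) → ℕ) :
    ∑ f ∈ Finset.Nat.antidiagonalTuple (k + 1) n, F f
      = ∑ ij ∈ Finset.HasAntidiagonal.antidiagonal n,
          ∑ g ∈ Finset.Nat.antidiagonalTuple k ij.2, F (Fin.cons ij.1 g) := by
  rw [← Finset.sum_sigma (Finset.HasAntidiagonal.antidiagonal n)
    (fun ij => Finset.Nat.antidiagonalTuple k ij.2) (fun x => F (Fin.cons x.1.1 x.2))]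
  symm
  apply Finset.sum_nbij' (i := fun x => Fin.cons x.1.1 x.2)
      (j := fun f => ⟨(f 0, ∑ i, Fin.tail f i), Fin.tail f⟩)
  · rintro ⟨⟨a, c⟩, g⟩ hx
    simp only [Finset.mem_sigma, Finset.HasAntidiagonal.mem_antidiagonal,
      Finset.Nat.mem_antidiagonalTuple] at hx ⊢
    rw [Fin.sum_cons, hx.2, hx.1]
  · intro f hf
    simp only [Finset.Nat.mem_antidiagonalTuple] at hf
    refine Finset.mem_sigma.mpr ⟨?_, Finset.Nat.mem_antidiagonalTuple.mpr rfl⟩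
    rw [Finset.HasAntidiagonal.mem_antidiagonal, ← hf, Fin.sum_univ_succ]
    rfl
  · rintro ⟨⟨a, c⟩, g⟩ hx
    simp only [Finset.mem_sigma, Finset.HasAntidiagonal.mem_antidiagonal,
      Finset.Nat.mem_antidiagonalTuple] at hx
    simp only [Fin.cons_zero, Fin.tail_cons]
    congr 1
    rw [hx.2]
  · intro f _
    simp [Fin.cons_self_tail]
  · rintro ⟨⟨a, c⟩, g⟩ _
    rfl

/-- The key combinatorial identity: the sum of products over tuples. -/
lemma sum_prod_antidiagonalTuple : ∀ (k N : ℕ),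
    ∑ g ∈ Finset.Nat.antidiagonalTuple (k + 1) N, ∏ j, g j = (N + k).choose (2 * k + 1) := by
  intro k
  induction k with
  | zero =>
    intro N
    simp [Nat.choose_one_right]
  | succ k ih =>
    intro N
    rw [sum_antidiagonalTuple_succ]
    have h1 : ∀ ij ∈ Finset.HasAntidiagonal.antidiagonal N,
        (∑ g ∈ Finset.Nat.antidiagonalTuple (k + 1) ij.2, ∏ j, (Fin.cons ij.1 g : Fin (k+2) → ℕ) j)
          = ij.1.choose 1 * (ij.2 + k).choose (2 * k + 1) := by
      intro ij _
      have : ∀ g : Fin (k + 1) → ℕ,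
          (∏ j, (Fin.cons ij.1 g : Fin (k+2) → ℕ) j) = ij.1 * ∏ j, g j := by
        intro g; rw [Fin.prod_cons]
      rw [Finset.sum_congr rfl fun g _ => this g, ← Finset.mul_sum, ih ij.2,
        Nat.choose_one_right]
    rw [Finset.sum_congr rfl h1]
    have h2 : ∑ ij ∈ Finset.HasAntidiagonal.antidiagonal N, ij.1.choose 1 * (ij.2 + k).choose (2 * k + 1)
        = ∑ ij ∈ Finset.HasAntidiagonal.antidiagonal (N + k), ij.1.choose 1 * ij.2.choose (2 * k + 1) := by
      symm
      apply antidiagonal_shift k (fun i j => i.choose 1 * j.choose (2 * k + 1))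
      intro i j hj
      rw [Nat.choose_eq_zero_of_lt (lt_of_lt_of_le hj (by omega)), Nat.mul_zero]
    rw [h2, choose_conv (2 * k + 1) (N + k) 1]
    congr 1 <;> ring

theorem genComp_linear_sub (m : ℕ) (hm : 1 ≤ m) (b : ℕ → ℕ) (hb : ∀ i, 1 ≤ i → b i = m * (i - 1))
    (n k : ℕ) (hn : 1 ≤ n) (hk : 1 ≤ k) :
    genComp b n k = m ^ k * Nat.choose (n - 1) (2 * k - 1) := by
  rcases lt_or_ge n k with hnk | hnk
  · -- n < k : both sides are zero
    have hempty : (Finset.Nat.antidiagonalTuple k n).filter (fun f => ∀ j, 0 < f j) = ∅ := by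
      apply Finset.eq_empty_of_forall_notMem
      intro f hf
      simp only [Finset.mem_filter, Finset.Nat.mem_antidiagonalTuple] at hf
      have : k ≤ ∑ j, f j := by
        calc k = ∑ _j : Fin k, 1 := by simp
        _ ≤ ∑ j, f j := Finset.sum_le_sum fun j _ => hf.2 j
      omega
    rw [genComp, hempty, Finset.sum_empty, Nat.choose_eq_zero_of_lt (by omega), Nat.mul_zero]
  · -- n ≥ k
    obtain ⟨k', rfl⟩ : ∃ k', k = k' + 1 := ⟨k - 1, by omega⟩
    obtain ⟨N, rfl⟩ : ∃ N, n = N + (k' + 1) := ⟨n - (k' + 1), by omega⟩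
    have key : genComp b (N + (k' + 1)) (k' + 1)
        = ∑ g ∈ Finset.Nat.antidiagonalTuple (k' + 1) N, ∏ j, b (g j + 1) := by
      rw [genComp]
      symm
      apply Finset.sum_nbij' (i := fun g => fun j => g j + 1) (j := fun f => fun j => f j - 1)
      · intro g hg
        simp only [Finset.Nat.mem_antidiagonalTuple] at hg
        simp only [Finset.mem_filter, Finset.Nat.mem_antidiagonalTuple]
        refine ⟨?_, fun j => Nat.succ_pos _⟩
        rw [Finset.sum_add_distrib, hg]
        simp
      · intro f hf
        simp only [Finset.mem_filter, Finset.Nat.mem_antidiagonalTuple] at hf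
        simp only [Finset.Nat.mem_antidiagonalTuple]
        have : ∑ j, (f j - 1 + 1) = N + (k' + 1) := by
          rw [Finset.sum_congr rfl fun j _ => Nat.sub_add_cancel (hf.2 j), hf.1]
        rw [Finset.sum_add_distrib] at this
        simp only [Finset.sum_const, Finset.card_univ, Fintype.card_fin, smul_eq_mul,
          mul_one] at this
        omega
      · intro g _; funext j; simp
      · intro f hf
        simp only [Finset.mem_filter, Finset.Nat.mem_antidiagonalTuple] at hf
        funext j
        exact Nat.sub_add_cancel (hf.2 j)
      · intro g _; rfl
    rw [key]
    have hbval : ∀ g ∈ Finset.Nat.antidiagonalTuple (k' + 1) N,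
        (∏ j, b (g j + 1)) = m ^ (k' + 1) * ∏ j, g j := by
      intro g _
      have hstep : ∀ j : Fin (k' + 1), b (g j + 1) = m * g j := by
        intro j
        rw [hb (g j + 1) (Nat.le_add_left _ _), Nat.add_sub_cancel]
      rw [Finset.prod_congr rfl fun j _ => hstep j, Finset.prod_mul_distrib, Finset.prod_const,
        Finset.card_univ, Fintype.card_fin]
    rw [Finset.sum_congr rfl hbval, ← Finset.mul_sum, sum_prod_antidiagonalTuple]
    have e1 : N + (k' + 1) - 1 = N + k' := by clear * -; omega
    have e2 : 2 * (k' + 1) - 1 = 2 * k' + 1 := by clear * -; omega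
    rw [e1, e2]
end

section
/- Let m be a positive integer and let b_i = m·i for all positive integers i. Then for all positive integers n and k, C^b(n,k) = m^k · binom(n+k-1, 2k-1). -/
open Finset

theorem sum_adt_succ (k n : ℕ) (g : (Fin (k+1) → ℕ) → ℕ) :
    ∑ f ∈ Finset.Nat.antidiagonalTuple (k+1) n, g f
      = ∑ p ∈ Finset.HasAntidiagonal.antidiagonal n,
          ∑ t ∈ Finset.Nat.antidiagonalTuple k p.2, g (Fin.cons p.1 t) := by
  rw [show (∑ p ∈ Finset.HasAntidiagonal.antidiagonal n, ∑ t ∈ Finset.Nat.antidiagonalTuple k p.2,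
        g (Fin.cons p.1 t))
      = ∑ x ∈ (Finset.HasAntidiagonal.antidiagonal n).sigma (fun p => Finset.Nat.antidiagonalTuple k p.2),
        g (Fin.cons x.1.1 x.2) from
    (Finset.sum_sigma (Finset.HasAntidiagonal.antidiagonal n) (fun p => Finset.Nat.antidiagonalTuple k p.2)
      (fun x => g (Fin.cons x.1.1 x.2))).symm]
  symm
  apply Finset.sum_nbij'
    (i := fun (x : (_ : ℕ × ℕ) × (Fin k → ℕ)) => Fin.cons x.1.1 x.2)
    (j := fun (f : Fin (k+1) → ℕ) =>
      (⟨(f 0, ∑ i : Fin k, f i.succ), Fin.tail f⟩ : (_ : ℕ × ℕ) × (Fin k → ℕ)))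
  · rintro ⟨⟨a, c⟩, t⟩ h
    simp only [Finset.mem_sigma, Finset.HasAntidiagonal.mem_antidiagonal,
      Finset.Nat.mem_antidiagonalTuple] at h ⊢
    rw [Fin.sum_cons, h.2, h.1]
  · intro f hf
    simp only [Finset.Nat.mem_antidiagonalTuple] at hf
    simp only [Finset.mem_sigma, Finset.HasAntidiagonal.mem_antidiagonal,
      Finset.Nat.mem_antidiagonalTuple]
    refine ⟨?_, rfl⟩
    rw [← hf, Fin.sum_univ_succ]
  · rintro ⟨⟨a, c⟩, t⟩ h
    simp only [Finset.mem_sigma, Finset.HasAntidiagonal.mem_antidiagonal,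
      Finset.Nat.mem_antidiagonalTuple] at h
    refine Sigma.ext ?_ ?_
    · simp [Fin.tail, h.2]
    · simp [Fin.tail]
  · intro f hf
    simp [Fin.cons_self_tail]
  · intros; rfl

theorem hockey (r : ℕ) : ∀ d, ∑ a ∈ range (d+1), (a+r).choose r = (d+r+1).choose (r+1) := by
  intro d
  induction d with
  | zero => simp
  | succ d ih =>
    rw [Finset.sum_range_succ, ih, show d+1+r = d+r+1 by ring,
      show d+r+1+1 = (d+r+1)+1 from rfl, Nat.choose_succ_succ (d+r+1) r]
    simp only [Nat.succ_eq_add_one]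
    omega

theorem keyB (r : ℕ) : ∀ d, ∑ a ∈ range (d+1), (d+1-a) * (a+r).choose r
    = (d+r+2).choose (r+2) := by
  intro d
  induction d with
  | zero => simp
  | succ d ih =>
    have h1 : ∑ a ∈ range (d+2), (d+2-a) * (a+r).choose r
        = (∑ a ∈ range (d+2), (d+1-a) * (a+r).choose r)
          + ∑ a ∈ range (d+2), (a+r).choose r := by
      rw [← Finset.sum_add_distrib]
      apply Finset.sum_congr rfl
      intro a ha
      simp only [Finset.mem_range] at ha
      have : d+2-a = (d+1-a)+1 := by omega
      rw [this]; ring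
    have h2 := hockey r (d+1)
    rw [show d+1+1 = d+2 by ring, show d+1+r+1 = d+r+2 by ring] at h2
    rw [h1, Finset.sum_range_succ, Nat.sub_self, zero_mul, add_zero, ih, h2,
      show d+1+r+2 = (d+r+2)+1 by ring, Nat.choose_succ_succ (d+r+2) (r+1)]
    simp only [Nat.succ_eq_add_one]
    rw [show r+1+1 = r+2 from rfl]
    omega

theorem core (k : ℕ) : ∀ d, (∑ g ∈ Finset.Nat.antidiagonalTuple (k+1) d,
    ∏ j, (g j + 1)) = (d + 2*k + 1).choose (2*k+1) := by
  induction k with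
  | zero =>
    intro d
    rw [Finset.Nat.antidiagonalTuple_one, Finset.sum_singleton]
    simp
  | succ k ih =>
    intro d
    rw [sum_adt_succ]
    have h1 : ∀ p ∈ Finset.HasAntidiagonal.antidiagonal d,
        (∑ t ∈ Finset.Nat.antidiagonalTuple (k+1) p.2,
          ∏ j, (Fin.cons p.1 t j + 1))
        = (p.1+1) * (p.2 + 2*k+1).choose (2*k+1) := by
      intro p hp
      have h2 : ∀ t : Fin (k+1) → ℕ, (∏ j, (Fin.cons p.1 t j + 1))
          = (p.1+1) * ∏ j, (t j + 1) := by
        intro t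
        rw [Fin.prod_univ_succ]
        simp
      simp_rw [h2]
      rw [← Finset.mul_sum, ih p.2]
    rw [Finset.sum_congr rfl h1, Finset.Nat.sum_antidiagonal_eq_sum_range_succ_mk]
    have h3 : (∑ i ∈ range (d+1), ((i, d - i).1 + 1) * ((i, d - i).2 + 2*k+1).choose (2*k+1))
        = ∑ j ∈ range (d+1), (d+1-j) * ((j + (2*k+1)).choose (2*k+1)) := by
      rw [← Finset.sum_range_reflect]
      apply Finset.sum_congr rfl
      intro j hj
      simp only [Finset.mem_range] at hj
      congr 1
      · omega
      · congr 1
        omega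
    rw [h3, keyB (2*k+1) d]
    congr 1 <;> ring_nf

theorem genComp_linear (m : ℕ) (hm : 1 ≤ m) (b : ℕ → ℕ) (hb : ∀ i, 1 ≤ i → b i = m * i)
    (n k : ℕ) (hn : 1 ≤ n) (hk : 1 ≤ k) :
    genComp b n k = m ^ k * Nat.choose (n + k - 1) (2 * k - 1) := by
  unfold genComp
  by_cases hkn : k ≤ n
  · -- main case
    have hstep : ∀ f ∈ (Finset.Nat.antidiagonalTuple k n).filter (fun f => ∀ j, 0 < f j),
        (∏ j, b (f j)) = m ^ k * ∏ j, f j := by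
      intro f hf
      rw [Finset.mem_filter] at hf
      calc (∏ j, b (f j)) = ∏ j, (m * f j) := by
            apply Finset.prod_congr rfl
            intro j _
            exact hb _ (hf.2 j)
        _ = m ^ k * ∏ j, f j := by
            rw [Finset.prod_mul_distrib, Finset.prod_const, Finset.card_univ, Fintype.card_fin]
    rw [Finset.sum_congr rfl hstep, ← Finset.mul_sum]
    congr 1
    have hbij : (∑ f ∈ (Finset.Nat.antidiagonalTuple k n).filter (fun f => ∀ j, 0 < f j),
        ∏ j, f j) = ∑ g ∈ Finset.Nat.antidiagonalTuple k (n - k), ∏ j, (g j + 1) := by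
      apply Finset.sum_nbij' (i := fun (f : Fin k → ℕ) => fun j => f j - 1)
        (j := fun (g : Fin k → ℕ) => fun j => g j + 1)
      · intro f hf
        rw [Finset.mem_filter, Finset.Nat.mem_antidiagonalTuple] at hf
        rw [Finset.Nat.mem_antidiagonalTuple]
        have e1 : (∑ j, (f j - 1)) + k = n := by
          calc (∑ j, (f j - 1)) + k = ∑ j : Fin k, ((f j - 1) + 1) := by
                rw [Finset.sum_add_distrib]; simp
            _ = ∑ j, f j := by
                refine Finset.sum_congr rfl fun j _ => ?_
                have := hf.2 j
                omega
            _ = n := hf.1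
        omega
      · intro g hg
        rw [Finset.Nat.mem_antidiagonalTuple] at hg
        rw [Finset.mem_filter, Finset.Nat.mem_antidiagonalTuple]
        constructor
        · rw [Finset.sum_add_distrib, hg]
          simp
          omega
        · intro j
          simp
      · intro f hf
        rw [Finset.mem_filter] at hf
        funext j
        have := hf.2 j
        dsimp only
        omega
      · intro g hg
        funext j
        dsimp only
        omega
      · intro f hf
        rw [Finset.mem_filter] at hf
        refine Finset.prod_congr rfl fun j _ => ?_
        have := hf.2 j
        dsimp only
        omega
    rw [hbij]
    obtain ⟨k', rfl⟩ : ∃ k', k = k' + 1 := ⟨k - 1, (Nat.succ_pred_eq_of_pos hk).symm⟩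
    rw [core k' (n - (k'+1))]
    congr 1
    all_goals (clear hstep hbij; omega)
  · -- k > n : both sides are zero
    have hempty : (Finset.Nat.antidiagonalTuple k n).filter (fun f => ∀ j, 0 < f j) = ∅ := by
      rw [Finset.filter_eq_empty_iff]
      intro f hf
      rw [Finset.Nat.mem_antidiagonalTuple] at hf
      intro hpos
      have : k ≤ ∑ j, f j := by
        calc k = ∑ _j : Fin k, 1 := by simp
          _ ≤ ∑ j, f j := Finset.sum_le_sum (fun j _ => hpos j)
      omega
    rw [hempty, Finset.sum_empty, Nat.choose_eq_zero_of_lt (by omega), mul_zero]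
end

section
/- Let p be a positive integer and let b_i = binom(p, i-1) for all positive integers i. Then for every positive integer n, C^b(n) = ∑_{k=1}^{n} binom(pk, n-k). -/
open Finset

theorem multi_vandermonde (p : ℕ) : ∀ (k m : ℕ),
    (∑ f ∈ Finset.Nat.antidiagonalTuple k m, ∏ j, Nat.choose p (f j)) = Nat.choose (p * k) m := by
  intro k
  induction k with
  | zero =>
    intro m
    cases m with
    | zero => simp
    | succ m => simp [Finset.Nat.antidiagonalTuple_zero_succ]
  | succ k ih =>
    intro m
    have key : (∑ f ∈ Finset.Nat.antidiagonalTuple (k + 1) m, ∏ j, Nat.choose p (f j))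
        = ∑ x ∈ (Finset.HasAntidiagonal.antidiagonal m).sigma
            (fun ab => Finset.Nat.antidiagonalTuple k ab.2),
            Nat.choose p x.1.1 * ∏ j, Nat.choose p (x.2 j) := by
      refine Finset.sum_bij' (fun (f : Fin (k + 1) → ℕ) _ => (⟨(f 0, ∑ j : Fin k, f j.succ), Fin.tail f⟩ : Σ _ab : ℕ × ℕ, Fin k → ℕ))
        (fun x _ => Fin.cons x.1.1 x.2) ?_ ?_ ?_ ?_ ?_
      · intro f hf
        rw [Finset.Nat.mem_antidiagonalTuple] at hf
        simp only [Finset.mem_sigma, Finset.HasAntidiagonal.mem_antidiagonal,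
          Finset.Nat.mem_antidiagonalTuple]
        refine ⟨by rw [← hf, Fin.sum_univ_succ], rfl⟩
      · intro x hx
        rw [Finset.mem_sigma, Finset.HasAntidiagonal.mem_antidiagonal,
          Finset.Nat.mem_antidiagonalTuple] at hx
        rw [Finset.Nat.mem_antidiagonalTuple, Fin.sum_univ_succ]
        simp [hx.2, hx.1]
      · intro f _
        exact Fin.cons_self_tail f
      · intro x hx
        rw [Finset.mem_sigma, Finset.Nat.mem_antidiagonalTuple] at hx
        ext <;> simp [hx.2]
      · intro f _
        rw [Fin.prod_univ_succ]
        rfl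
    rw [key, Finset.sum_sigma]
    have : ∀ ab ∈ Finset.HasAntidiagonal.antidiagonal m,
        (∑ g ∈ Finset.Nat.antidiagonalTuple k ab.2,
          Nat.choose p ab.1 * ∏ j, Nat.choose p (g j))
        = Nat.choose p ab.1 * Nat.choose (p * k) ab.2 := by
      intro ab _
      rw [← Finset.mul_sum, ih]
    rw [Finset.sum_congr rfl this]
    rw [show p * (k + 1) = p + p * k by ring, Nat.add_choose_eq]

theorem genCompAll_binom_upper (p : ℕ) (hp : 1 ≤ p) (b : ℕ → ℕ)
    (hb : ∀ i, 1 ≤ i → b i = Nat.choose p (i - 1)) (n : ℕ) (hn : 1 ≤ n) :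
    genCompAll b n = ∑ k ∈ Finset.Icc 1 n, Nat.choose (p * k) (n - k) := by
  have hcomp : ∀ k, 1 ≤ k → k ≤ n → genComp b n k = Nat.choose (p * k) (n - k) := by
    intro k hk1 hkn
    rw [← multi_vandermonde p k (n - k)]
    unfold genComp
    refine Finset.sum_bij' (fun (f : Fin k → ℕ) _ => fun j => f j - 1) (fun (g : Fin k → ℕ) _ => fun j => g j + 1)
      ?_ ?_ ?_ ?_ ?_
    · intro f hf
      rw [Finset.mem_filter, Finset.Nat.mem_antidiagonalTuple] at hf
      rw [Finset.Nat.mem_antidiagonalTuple]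
      have : (∑ j, (f j - 1)) + k = n := by
        have : (∑ j, (f j - 1)) + (∑ _j : Fin k, 1) = ∑ j, f j := by
          rw [← Finset.sum_add_distrib]
          exact Finset.sum_congr rfl fun j _ => Nat.sub_add_cancel (hf.2 j)
        simpa [hf.1] using this
      show (∑ j : Fin k, (f j - 1)) = n - k
      rw [← this, Nat.add_sub_cancel]
    · intro g hg
      rw [Finset.Nat.mem_antidiagonalTuple] at hg
      rw [Finset.mem_filter, Finset.Nat.mem_antidiagonalTuple]
      constructor
      · show (∑ j : Fin k, (g j + 1)) = n
        rw [Finset.sum_add_distrib, hg]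
        simp
        omega
      · exact fun j => Nat.succ_pos _
    · intro f hf
      rw [Finset.mem_filter] at hf
      funext j
      exact Nat.sub_add_cancel (hf.2 j)
    · intro g _
      funext j
      simp
    · intro f hf
      rw [Finset.mem_filter] at hf
      exact Finset.prod_congr rfl fun j _ => hb (f j) (hf.2 j)
  have h0 : genComp b n 0 = 0 := by
    unfold genComp
    cases n with
    | zero => omega
    | succ m => simp [Finset.Nat.antidiagonalTuple_zero_succ]
  have hset : Finset.range (n + 1) = insert 0 (Finset.Icc 1 n) := by
    ext x
    simp only [Finset.mem_range, Finset.mem_insert, Finset.mem_Icc]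
    omega
  unfold genCompAll
  rw [hset, Finset.sum_insert (by simp), h0, zero_add]
  exact Finset.sum_congr rfl fun k hk => by
    rw [Finset.mem_Icc] at hk
    exact hcomp k hk.1 hk.2
end

section
/- Let p be a positive integer and let b_i = binom(p+i-1, p) for all positive integers i. Then for all positive integers n and k, C^b(n,k) = binom(n+pk-1, pk+k-1). -/
open Finset

lemma revsum_choose (c M : ℕ) :
    ∑ t ∈ range (M + 1), (M - t + c).choose c = (M + c + 1).choose (c + 1) := by
  have h := Finset.sum_range_reflect (fun t => (t + c).choose c) (M + 1)
  simp only [Nat.add_sub_cancel] at h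
  rw [h, Nat.sum_range_add_choose]

lemma conv_choose (a : ℕ) : ∀ (c N : ℕ),
    ∑ x ∈ range (N + 1), (x + a).choose a * (N - x + c).choose c
      = (N + a + c + 1).choose (a + c + 1) := by
  induction a with
  | zero =>
    intro c N
    simp only [Nat.add_zero, Nat.choose_zero_right, one_mul]
    rw [revsum_choose]
    congr 1 <;> omega
  | succ a ih =>
    intro c N
    have step : ∀ x, (x + (a + 1)).choose (a + 1)
        = ∑ z ∈ range (x + 1), (z + a).choose a := by
      intro x
      rw [← Nat.add_assoc, ← Nat.sum_range_add_choose x a]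
    calc ∑ x ∈ range (N + 1), (x + (a + 1)).choose (a + 1) * (N - x + c).choose c
        = ∑ x ∈ Ico 0 (N + 1), ∑ z ∈ Ico 0 (x + 1),
            (z + a).choose a * (N - x + c).choose c := by
          rw [← Finset.range_eq_Ico]
          refine Finset.sum_congr rfl fun x _ => ?_
          rw [step x, Finset.sum_mul, Finset.range_eq_Ico]
      _ = ∑ z ∈ Ico 0 (N + 1), ∑ x ∈ Ico z (N + 1),
            (z + a).choose a * (N - x + c).choose c := by
          rw [Finset.sum_Ico_Ico_comm]
      _ = ∑ z ∈ range (N + 1), (z + a).choose a * (N - z + (c + 1)).choose (c + 1) := by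
          rw [← Finset.range_eq_Ico]
          refine Finset.sum_congr rfl fun z hz => ?_
          rw [mem_range] at hz
          rw [← Finset.mul_sum]
          congr 1
          rw [Finset.sum_Ico_eq_sum_range]
          have h1 : N + 1 - z = (N - z) + 1 := by omega
          rw [h1]
          have h2 : ∀ t ∈ range (N - z + 1),
              (N - (z + t) + c).choose c = ((N - z) - t + c).choose c := by
            intro t ht; congr 1; omega
          rw [Finset.sum_congr rfl h2, revsum_choose]
          congr 1 <;> omega
      _ = (N + (a + 1) + c + 1).choose ((a + 1) + c + 1) := by
          rw [ih (c + 1) N]; congr 1 <;> omega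

lemma genComp_zero (b : ℕ → ℕ) (k : ℕ) (hk : 1 ≤ k) : genComp b 0 k = 0 := by
  unfold genComp
  rw [Finset.Nat.antidiagonalTuple_zero_right]
  rw [Finset.filter_singleton]
  have : ¬ (∀ j : Fin k, 0 < (0 : Fin k → ℕ) j) := by
    intro h
    exact absurd (h ⟨0, hk⟩) (by simp)
  rw [if_neg this, Finset.sum_empty]

lemma genComp_one (b : ℕ → ℕ) (n : ℕ) (hn : 1 ≤ n) : genComp b n 1 = b n := by
  unfold genComp
  rw [Finset.Nat.antidiagonalTuple_one]
  rw [Finset.filter_singleton]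
  have : ∀ j : Fin 1, 0 < (![n] : Fin 1 → ℕ) j := by
    intro j
    fin_cases j
    simpa using (show 0 < n from hn)
  rw [if_pos this, Finset.sum_singleton]
  simp

lemma genComp_succ_s12 (b : ℕ → ℕ) (n k : ℕ) :
    genComp b n (k + 1) = ∑ m ∈ range n, b (n - m) * genComp b m k := by
  unfold genComp
  have : ∀ m ∈ range n, b (n - m) *
      (∑ f ∈ (Finset.Nat.antidiagonalTuple k m).filter (fun f => ∀ j, 0 < f j), ∏ j, b (f j))
      = ∑ f ∈ (Finset.Nat.antidiagonalTuple k m).filter (fun f => ∀ j, 0 < f j),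
          b (n - m) * ∏ j, b (f j) := fun m _ => Finset.mul_sum _ _ _
  rw [Finset.sum_congr rfl this]
  refine Eq.trans ?_ (Finset.sum_sigma (range n)
    (fun m => (Finset.Nat.antidiagonalTuple k m).filter (fun f => ∀ j, 0 < f j))
    (fun x => b (n - x.1) * ∏ j, b (x.2 j)))
  refine Finset.sum_nbij' (fun f => ⟨∑ j : Fin k, f j.succ, Fin.tail f⟩)
    (fun x => Fin.cons (n - x.1) x.2) ?_ ?_ ?_ ?_ ?_
  · intro f hf
    rw [Finset.mem_filter, Finset.Nat.mem_antidiagonalTuple] at hf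
    obtain ⟨hsum, hpos⟩ := hf
    rw [Fin.sum_univ_succ] at hsum
    refine Finset.mem_sigma.mpr ⟨?_, ?_⟩
    · rw [mem_range]
      exact Nat.lt_of_lt_of_le (Nat.lt_add_of_pos_left (hpos 0)) (le_of_eq hsum)
    · rw [Finset.mem_filter, Finset.Nat.mem_antidiagonalTuple]
      exact ⟨rfl, fun j => hpos j.succ⟩
  · rintro ⟨m, g⟩ hx
    rw [Finset.mem_sigma, mem_range, Finset.mem_filter,
      Finset.Nat.mem_antidiagonalTuple] at hx
    obtain ⟨hm, hsum, hpos⟩ := hx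
    rw [Finset.mem_filter, Finset.Nat.mem_antidiagonalTuple]
    constructor
    · rw [Fin.sum_cons, hsum]; omega
    · intro j
      refine Fin.cases ?_ ?_ j
      · simpa using Nat.sub_pos_of_lt hm
      · intro i; simpa using hpos i
  · intro f hf
    rw [Finset.mem_filter, Finset.Nat.mem_antidiagonalTuple] at hf
    obtain ⟨hsum, hpos⟩ := hf
    rw [Fin.sum_univ_succ] at hsum
    have h0 : n - ∑ j : Fin k, f j.succ = f 0 := Nat.sub_eq_of_eq_add hsum.symm
    simp only [h0]
    exact Fin.cons_self_tail f
  · rintro ⟨m, g⟩ hx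
    rw [Finset.mem_sigma, mem_range, Finset.mem_filter,
      Finset.Nat.mem_antidiagonalTuple] at hx
    obtain ⟨hm, hsum, hpos⟩ := hx
    refine Sigma.ext ?_ ?_
    · simp only [Fin.cons_succ]
      exact hsum
    · exact HEq.rfl
  · intro f hf
    rw [Finset.mem_filter, Finset.Nat.mem_antidiagonalTuple] at hf
    obtain ⟨hsum, hpos⟩ := hf
    rw [Fin.sum_univ_succ] at hsum
    have h0 : n - ∑ j : Fin k, f j.succ = f 0 := Nat.sub_eq_of_eq_add hsum.symm
    rw [Fin.prod_univ_succ, h0]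
    rfl

lemma key_sum (p k n : ℕ) (hp : 1 ≤ p) (hk : 1 ≤ k) :
    ∑ m ∈ range n, (p + (n - m) - 1).choose p * (m + p * k - 1).choose (p * k + k - 1)
      = (n + p * (k + 1) - 1).choose (p * (k + 1) + (k + 1) - 1) := by
  have hpk : 1 ≤ p * k := Nat.one_le_iff_ne_zero.mpr (by positivity)
  by_cases h : n ≤ k
  · have hz : ∀ m ∈ range n,
        (p + (n - m) - 1).choose p * (m + p * k - 1).choose (p * k + k - 1) = 0 := by
      intro m hm
      rw [mem_range] at hm
      have : m + p * k - 1 < p * k + k - 1 := by omega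
      rw [Nat.choose_eq_zero_of_lt this, Nat.mul_zero]
    rw [Finset.sum_congr rfl hz, Finset.sum_const, smul_zero]
    have hx : p * (k + 1) = p * k + p := by ring
    rw [Nat.choose_eq_zero_of_lt (by omega : 
      n + p * (k + 1) - 1 < p * (k + 1) + (k + 1) - 1)]
  · push_neg at h
    set N := n - k - 1 with hN
    rw [Finset.range_eq_Ico, ← Finset.sum_Ico_consecutive _ (Nat.zero_le k) (le_of_lt h)]
    have hz : ∀ m ∈ Ico 0 k,
        (p + (n - m) - 1).choose p * (m + p * k - 1).choose (p * k + k - 1) = 0 := by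
      intro m hm
      rw [mem_Ico] at hm
      have : m + p * k - 1 < p * k + k - 1 := by omega
      rw [Nat.choose_eq_zero_of_lt this, Nat.mul_zero]
    rw [Finset.sum_congr rfl hz, Finset.sum_const, smul_zero, zero_add]
    rw [Finset.sum_Ico_eq_sum_range]
    have hnk : n - k = N + 1 := by omega
    rw [hnk]
    have heq : ∀ z ∈ range (N + 1),
        (p + (n - (k + z)) - 1).choose p * (k + z + p * k - 1).choose (p * k + k - 1)
        = (z + (p * k + k - 1)).choose (p * k + k - 1) * (N - z + p).choose p := by
      intro z hz
      rw [mem_range] at hz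
      rw [mul_comm]
      congr 2 <;> omega
    rw [Finset.sum_congr rfl heq, conv_choose]
    have hx : p * (k + 1) = p * k + p := by ring
    congr 1 <;> omega

theorem genComp_figured (p : ℕ) (hp : 1 ≤ p) (b : ℕ → ℕ)
    (hb : ∀ i, 1 ≤ i → b i = Nat.choose (p + i - 1) p)
    (n k : ℕ) (hn : 1 ≤ n) (hk : 1 ≤ k) :
    genComp b n k = Nat.choose (n + p * k - 1) (p * k + k - 1) := by
  induction k, hk using Nat.le_induction generalizing n with
  | base =>
    rw [genComp_one b n hn, hb n hn]
    congr 1 <;> omega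
  | succ k hk ih =>
    have hpk : 1 ≤ p * k := Nat.one_le_iff_ne_zero.mpr (by positivity)
    rw [genComp_succ_s12]
    have heq : ∀ m ∈ range n, b (n - m) * genComp b m k
        = (p + (n - m) - 1).choose p * (m + p * k - 1).choose (p * k + k - 1) := by
      intro m hm
      rw [mem_range] at hm
      rw [hb (n - m) (by omega)]
      congr 1
      rcases Nat.eq_zero_or_pos m with rfl | hm1
      · rw [genComp_zero b k hk, Nat.choose_eq_zero_of_lt (by omega)]
      · exact ih m hm1
    rw [Finset.sum_congr rfl heq, key_sum p k n hp hk]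
end

section
/- Let q be a positive integer and let b_i = binom(i, q) for all positive integers i. Then for all positive integers n and k, C^b(n,k) = binom(n+k-1, qk+k-1). -/
open Finset

/-- Hockey stick, `range` version. -/
lemma hockey_range (m p : ℕ) :
    ∑ x ∈ range (m + 1), x.choose p = (m + 1).choose (p + 1) := by
  have h1 : range (m + 1) = Icc 0 m := by ext x; simp [Nat.lt_succ_iff]
  have h2 : ∑ x ∈ Icc 0 m, x.choose p = ∑ x ∈ Icc p m, x.choose p := by
    refine (Finset.sum_subset (fun x hx => ?_) (fun x hx hx' => ?_)).symm
    · simp only [mem_Icc] at hx ⊢; omega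
    · simp only [mem_Icc] at hx hx'
      exact Nat.choose_eq_zero_of_lt (by omega)
  rw [h1, h2, Nat.sum_Icc_choose]

/-- Vandermonde-type convolution. -/
lemma vdm (p : ℕ) : ∀ m r, ∑ x ∈ range (m + 1), x.choose p * (m - x).choose r
    = (m + 1).choose (p + r + 1) := by
  intro m
  induction m with
  | zero =>
    intro r
    rcases Nat.eq_zero_or_pos p with hp | hp
    · rcases Nat.eq_zero_or_pos r with hr | hr
      · simp [hp, hr]
      · simp [hp, Nat.choose_eq_zero_of_lt, hr, Nat.choose_eq_zero_of_lt (by omega : 1 < 0 + r + 1)]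
    · simp [Nat.choose_eq_zero_of_lt hp, Nat.choose_eq_zero_of_lt (by omega : 1 < p + r + 1)]
  | succ m ih =>
    intro r
    cases r with
    | zero =>
      simp only [Nat.choose_zero_right, mul_one]
      rw [hockey_range]
    | succ r =>
      have e : p + (r + 1) + 1 = (p + r + 1) + 1 := by omega
      rw [e, Finset.sum_range_succ]
      have key : ∀ x ∈ range (m + 1),
          x.choose p * (m + 1 - x).choose (r + 1)
            = x.choose p * (m - x).choose (r + 1) + x.choose p * (m - x).choose r := by
        intro x hx
        rw [mem_range] at hx
        have hx2 : m + 1 - x = (m - x) + 1 := by omega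
        rw [hx2, Nat.choose_succ_succ, Nat.mul_add, add_comm (_ * _)]
      rw [Finset.sum_congr rfl key, Finset.sum_add_distrib, ih (r + 1), ih r,
        Nat.sub_self, Nat.choose_eq_zero_of_lt (Nat.succ_pos r), mul_zero, add_zero, e,
        Nat.choose_succ_succ' (m + 1) (p + r + 1)]
      omega

/-- Recurrence for sums over `antidiagonalTuple`. -/
lemma tuple_sum_succ (c : ℕ → ℕ) (n k : ℕ) :
    ∑ f ∈ Finset.Nat.antidiagonalTuple (k + 1) n, ∏ j, c (f j)
      = ∑ ij ∈ Finset.HasAntidiagonal.antidiagonal n,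
          c ij.1 * ∑ f ∈ Finset.Nat.antidiagonalTuple k ij.2, ∏ j, c (f j) := by
  have h2 : ∑ ij ∈ Finset.HasAntidiagonal.antidiagonal n,
          c ij.1 * ∑ f ∈ Finset.Nat.antidiagonalTuple k ij.2, ∏ j, c (f j)
      = ∑ p ∈ (Finset.HasAntidiagonal.antidiagonal n).sigma
          (fun ij => Finset.Nat.antidiagonalTuple k ij.2),
          c p.1.1 * ∏ j, c (p.2 j) := by
    rw [Finset.sum_sigma]
    exact Finset.sum_congr rfl fun ij _ => by rw [Finset.mul_sum]
  rw [h2]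
  refine Finset.sum_nbij' (i := fun f => (⟨(f 0, ∑ j, Fin.tail f j), Fin.tail f⟩ :
      Σ _ : ℕ × ℕ, Fin k → ℕ)) (j := fun p => Fin.cons p.1.1 p.2) ?_ ?_ ?_ ?_ ?_
  · intro f hf
    rw [Finset.Nat.mem_antidiagonalTuple] at hf
    simp only [Finset.mem_sigma, Finset.Nat.mem_antidiagonalTuple, Finset.HasAntidiagonal.mem_antidiagonal]
    refine ⟨?_, trivial⟩
    rw [← hf, Fin.sum_univ_succ]
    rfl
  · rintro ⟨⟨a, b'⟩, f⟩ hp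
    simp only [Finset.mem_sigma, Finset.Nat.mem_antidiagonalTuple,
      Finset.HasAntidiagonal.mem_antidiagonal] at hp
    rw [Finset.Nat.mem_antidiagonalTuple, Fin.sum_cons, hp.2]
    exact hp.1
  · intro f hf
    exact Fin.cons_self_tail f
  · rintro ⟨⟨a, b'⟩, f⟩ hp
    simp only [Finset.mem_sigma, Finset.Nat.mem_antidiagonalTuple,
      Finset.mem_antidiagonal] at hp
    simp only [Fin.cons_zero, Fin.tail_cons]
    congr 1
    rw [hp.2]
  · intro f hf
    rw [Fin.prod_univ_succ]
    rfl

lemma tuple_sum_succ_choose (q n k : ℕ) :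
    ∑ f ∈ Finset.Nat.antidiagonalTuple (k + 1) n, ∏ j, (f j).choose q
      = ∑ ij ∈ Finset.HasAntidiagonal.antidiagonal n,
          ij.1.choose q * ∑ f ∈ Finset.Nat.antidiagonalTuple k ij.2, ∏ j, (f j).choose q :=
  tuple_sum_succ (fun i => i.choose q) n k

/-- Main computation for `c i = i.choose q`. -/
lemma tuple_sum_choose (q : ℕ) (hq : 1 ≤ q) :
    ∀ k, 1 ≤ k → ∀ n, ∑ f ∈ Finset.Nat.antidiagonalTuple k n, ∏ j, (f j).choose q
      = (n + k - 1).choose (q * k + k - 1) := by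
  intro k hk
  induction k, hk using Nat.le_induction with
  | base =>
    intro n
    simp [Finset.Nat.antidiagonalTuple_one]
  | succ k hk ih =>
    intro n
    obtain ⟨m, rfl⟩ : ∃ m, k = m + 1 := ⟨k - 1, by omega⟩
    rw [tuple_sum_succ_choose q n (m + 1)]
    have hih : ∀ b', ∑ f ∈ Finset.Nat.antidiagonalTuple (m + 1) b', ∏ i, (f i).choose q
        = (b' + m).choose (q * (m + 1) + m) := by
      intro b'
      rw [ih b']
      congr 1 <;> omega
    rw [Finset.Nat.sum_antidiagonal_eq_sum_range_succ_mk]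
    simp only [hih]
    have hR : ∀ y, y < q * (m + 1) + m → y.choose (q * (m + 1) + m) = 0 :=
      fun y hy => Nat.choose_eq_zero_of_lt hy
    have step0 : ∑ x ∈ range (n + 1), x.choose q * (n - x + m).choose (q * (m + 1) + m)
        = ∑ x ∈ range (n + 1), x.choose q * (n + m - x).choose (q * (m + 1) + m) := by
      refine Finset.sum_congr rfl fun x hx => ?_
      rw [mem_range] at hx
      have hxx : n - x + m = n + m - x := by omega
      rw [hxx]
    have step1 : ∑ x ∈ range (n + 1), x.choose q * (n + m - x).choose (q * (m + 1) + m)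
        = ∑ x ∈ range (n + m + 1), x.choose q * (n + m - x).choose (q * (m + 1) + m) := by
      refine Finset.sum_subset (fun x hx => ?_) (fun x hx hx' => ?_)
      · rw [mem_range] at hx ⊢; omega
      · rw [mem_range] at hx hx'
        rw [hR _ (by omega), mul_zero]
    rw [step0, step1, vdm]
    have hmul : q * (m + 1 + 1) = q * (m + 1) + q := by ring
    congr 1 <;> omega


theorem genComp_binom_lower (q : ℕ) (hq : 1 ≤ q) (b : ℕ → ℕ)
    (hb : ∀ i, 1 ≤ i → b i = Nat.choose i q)
    (n k : ℕ) (hn : 1 ≤ n) (hk : 1 ≤ k) :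
    genComp b n k = Nat.choose (n + k - 1) (q * k + k - 1) := by
  rw [genComp]
  have h1 : ∑ f ∈ (Finset.Nat.antidiagonalTuple k n).filter (fun f => ∀ j, 0 < f j),
      ∏ j, b (f j)
      = ∑ f ∈ (Finset.Nat.antidiagonalTuple k n).filter (fun f => ∀ j, 0 < f j),
        ∏ j, (f j).choose q := by
    refine Finset.sum_congr rfl fun f hf => ?_
    rw [Finset.mem_filter] at hf
    exact Finset.prod_congr rfl fun j _ => hb _ (hf.2 j)
  have h2 : ∑ f ∈ (Finset.Nat.antidiagonalTuple k n).filter (fun f => ∀ j, 0 < f j),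
      ∏ j, (f j).choose q
      = ∑ f ∈ Finset.Nat.antidiagonalTuple k n, ∏ j, (f j).choose q := by
    refine Finset.sum_subset (Finset.filter_subset _ _) fun f hf hf' => ?_
    rw [Finset.mem_filter] at hf'
    have hnall : ¬ ∀ j, 0 < f j := fun h => hf' ⟨hf, h⟩
    obtain ⟨j, hj⟩ := not_forall.mp hnall
    refine Finset.prod_eq_zero (Finset.mem_univ j) ?_
    rw [Nat.eq_zero_of_not_pos hj]
    exact Nat.choose_eq_zero_of_lt hq
  rw [h1, h2, tuple_sum_choose q hq k hk n]
end
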